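/- Let e ≥ 1 be an integer, θ ≥ 2 an integer, and (α_k)_{k∈ℕ} a sequence of real numbers with α₀ > 0 for which there exists c > 1 with α_{k+1} > c·α_k for all k. Let J ⊆ ℕ∖{0} have cardinality at least 2, let F ⊆ ℝ be a finite set, and let φ : ℕ → {0,…,e} be a function such that φ⁻¹({i}) is infinite for every i ∈ {0,…,e}. Then there exist e+1 sequences (u_k^i)_{k∈ℕ} (i = 0,…,e) such that for all i and k: u_k^i ∈ J if φ(k) = i and u_k^i = 0 otherwise, and such that the e+1 real numbers σ_i = Σ_{k=0}^{∞} u_k^i / θ^{⌊α_k⌋} (i = 0,…,e) form a family that is algebraically independent over ℚ(F). -/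

import Mathlib

set_option maxHeartbeats 1000000

noncomputable section



open Polynomial in
theorem aux_countable_algebraic {R : Type*} [CommRing R] [Countable R] [Algebra R ℝ]
    (hinj : Function.Injective (algebraMap R ℝ)) :
    {x : ℝ | IsAlgebraic R x}.Countable := by
  have hAM : Countable (AddMonoidAlgebra R ℕ) :=
    Function.Injective.countable (f := AddMonoidAlgebra.coeff)
      (fun p q h => by cases p; cases q; simp_all)
  have hPc : Countable R[X] :=
    Function.Injective.countable (f := Polynomial.toFinsupp)
      (fun p q h => Polynomial.toFinsupp_injective h)
  have hsub : {x : ℝ | IsAlgebraic R x} ⊆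
      ⋃ p : {q : R[X] // q ≠ 0}, {x : ℝ | ((p : R[X]).map (algebraMap R ℝ)).IsRoot x} := by
    rintro x ⟨p, hp0, hpx⟩
    refine Set.mem_iUnion.2 ⟨⟨p, hp0⟩, ?_⟩
    simp only [Set.mem_setOf_eq, IsRoot.def, eval_map, ← aeval_def]
    exact hpx
  refine Set.Countable.mono hsub (Set.countable_iUnion fun p => ?_)
  exact (finite_setOf_isRoot ((Polynomial.map_ne_zero_iff hinj).2 p.2)).countable

theorem aux_uncountable_arrow (V : Type) [Infinite V] : Uncountable (V → Bool) := by
  rw [← Cardinal.aleph0_lt_mk_iff]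
  calc (Cardinal.aleph0 : Cardinal) ≤ Cardinal.mk V := Cardinal.aleph0_le_mk V
  _ < 2 ^ Cardinal.mk V := Cardinal.cantor _
  _ = Cardinal.mk (V → Bool) := by rw [← Cardinal.mk_bool, Cardinal.power_def]

set_option maxHeartbeats 1000000
noncomputable section

theorem aux_summable {θr : ℝ} (hθ2 : 2 ≤ θr) {w : ℕ → ℤ} {N : ℕ}
    (hw : ∀ k, N ≤ k → w k + 2 ≤ w (k + 1)) :
    Summable (fun k => θr ^ (-(w k))) := by
  have hθ0 : (0:ℝ) < θr := by linarith
  have hθ1 : (1:ℝ) ≤ θr := by linarith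
  rw [← summable_nat_add_iff N]
  refine summable_of_ratio_norm_eventually_le (r := θr ^ (-2 : ℤ)) ?_ ?_
  · have h4 : (4:ℝ) ≤ θr ^ (2:ℕ) := by nlinarith
    have : θr ^ (-2 : ℤ) = (θr ^ (2:ℕ))⁻¹ := by
      rw [zpow_neg, zpow_ofNat]
    rw [this]
    rw [inv_lt_one_iff₀]
    right; linarith
  · filter_upwards with k
    have hp1 : (0:ℝ) < θr ^ (-(w (k + 1 + N))) := zpow_pos hθ0 _
    have hp2 : (0:ℝ) < θr ^ (-(w (k + N))) := zpow_pos hθ0 _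
    rw [Real.norm_eq_abs, Real.norm_eq_abs, abs_of_pos hp1, abs_of_pos hp2]
    have h2 : w (k + N) + 2 ≤ w (k + 1 + N) := by
      have := hw (k + N) (Nat.le_add_left N k)
      have he : k + N + 1 = k + 1 + N := by omega
      rwa [he] at this
    calc θr ^ (-(w (k + 1 + N))) ≤ θr ^ ((-2) + (-(w (k + N)))) :=
          zpow_le_zpow_right₀ hθ1 (by omega)
    _ = θr ^ (-2 : ℤ) * θr ^ (-(w (k + N))) := zpow_add₀ (ne_of_gt hθ0) _ _

theorem aux_summable_digits {θr : ℝ} (hθ2 : 2 ≤ θr) {w : ℕ → ℤ} {N : ℕ}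
    (hw : ∀ k, N ≤ k → w k + 2 ≤ w (k + 1))
    (d : ℕ → ℕ) (M : ℕ) (hd : ∀ k, d k ≤ M) :
    Summable (fun k => (d k : ℝ) / θr ^ (w k)) := by
  have hθ0 : (0:ℝ) < θr := by linarith
  refine Summable.of_nonneg_of_le (fun k => by positivity) (fun k => ?_)
    ((aux_summable hθ2 hw).mul_left (M : ℝ))
  rw [div_eq_mul_inv, ← zpow_neg]
  have := zpow_pos hθ0 (-(w k))
  have hcast : (d k : ℝ) ≤ (M : ℝ) := Nat.cast_le.2 (hd k)
  nlinarith

theorem aux_sep {θr : ℝ} (hθ2 : 2 ≤ θr) {w : ℕ → ℤ} {N : ℕ}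
    (hw : ∀ k, N ≤ k → ∀ j : ℕ, w k + 2 * (j : ℤ) ≤ w (k + j))
    (d d' : ℕ → ℕ) (M : ℕ) (hdM : ∀ k, d k ≤ M) (hd'M : ∀ k, d' k ≤ M)
    {D : ℝ} (hDpos : 0 < D)
    (hD : ∀ k, |(d k : ℝ) - (d' k : ℝ)| ≤ D)
    {k₀ : ℕ} (hk₀ : N ≤ k₀) (hbelow : ∀ k, k < k₀ → d k = d' k)
    (hat : |(d k₀ : ℝ) - (d' k₀ : ℝ)| = D) :
    ∑' k, (d k : ℝ) / θr ^ w k ≠ ∑' k, (d' k : ℝ) / θr ^ w k := by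
  have hθ0 : (0:ℝ) < θr := by linarith
  have hθ1 : (1:ℝ) ≤ θr := by linarith
  have hw1 : ∀ k, N ≤ k → w k + 2 ≤ w (k + 1) := by
    intro k hk
    have := hw k hk 1
    push_cast at this
    omega
  have hsum : Summable (fun k => (d k : ℝ) / θr ^ w k) :=
    aux_summable_digits hθ2 hw1 d M hdM
  have hsum' : Summable (fun k => (d' k : ℝ) / θr ^ w k) :=
    aux_summable_digits hθ2 hw1 d' M hd'M
  set f : ℕ → ℝ := fun k => ((d k : ℝ) - (d' k : ℝ)) / θr ^ w k with hf
  have hfeq : f = fun k => (d k : ℝ) / θr ^ w k - (d' k : ℝ) / θr ^ w k := by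
    funext k; rw [hf]; ring
  have hfsum : Summable f := by rw [hfeq]; exact hsum.sub hsum'
  intro h
  have hf0 : ∑' k, f k = 0 := by
    rw [hfeq, Summable.tsum_sub hsum hsum', h, sub_self]
  have hsplit := Summable.sum_add_tsum_nat_add (f := f) (k₀ + 1) hfsum
  have hsumeq : (∑ k ∈ Finset.range (k₀ + 1), f k) = f k₀ := by
    refine Finset.sum_eq_single_of_mem k₀ (Finset.self_mem_range_succ k₀) ?_
    intro b hb hbne
    have hblt : b < k₀ := by
      have := Finset.mem_range.1 hb; omega
    rw [hf]
    simp [hbelow b hblt]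
  set E : ℝ := D / θr ^ w k₀ with hE
  have hEpos : 0 < E := div_pos hDpos (zpow_pos hθ0 _)
  have hfk₀ : |f k₀| = E := by
    rw [hf, hE, abs_div, abs_of_pos (zpow_pos hθ0 _), hat]
  -- tail bound
  have htail : |∑' j, f (j + (k₀ + 1))| ≤ E / 3 := by
    have habs : Summable (fun j => |f (j + (k₀ + 1))|) := by
      have := hfsum.abs
      exact (summable_nat_add_iff (k₀ + 1)).2 this
    have hgs : Summable (fun j : ℕ => E * (1/4 : ℝ) ^ (j + 1)) := by
      have : Summable (fun j : ℕ => (1/4 : ℝ) ^ j) :=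
        summable_geometric_of_lt_one (by norm_num) (by norm_num)
      have h2 : Summable (fun j : ℕ => (E * (1/4)) * (1/4 : ℝ) ^ j) := this.mul_left _
      exact h2.congr (fun j => by rw [pow_succ]; ring)
    have hbound : ∀ j : ℕ, |f (j + (k₀ + 1))| ≤ E * (1/4 : ℝ) ^ (j + 1) := by
      intro j
      have hkk : k₀ + (j + 1) = j + (k₀ + 1) := by omega
      have hwge : w k₀ + 2 * ((j : ℤ) + 1) ≤ w (j + (k₀ + 1)) := by
        have := hw k₀ hk₀ (j + 1)
        rw [hkk] at this
        push_cast at this ⊢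
        omega
      have h1 : |f (j + (k₀ + 1))| ≤ D * θr ^ (-(w (j + (k₀ + 1)))) := by
        rw [hf]
        rw [abs_div, abs_of_pos (zpow_pos hθ0 _), div_eq_mul_inv, ← zpow_neg]
        exact mul_le_mul_of_nonneg_right (hD _) (le_of_lt (zpow_pos hθ0 _))
      have h2 : θr ^ (-(w (j + (k₀ + 1)))) ≤ θr ^ (-(w k₀) - 2 * ((j:ℤ) + 1)) :=
        zpow_le_zpow_right₀ hθ1 (by omega)
      have h3 : θr ^ (-(w k₀) - 2 * ((j:ℤ) + 1))
          = θr ^ (-(w k₀)) * (θr ^ (-2:ℤ)) ^ (j + 1) := by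
        rw [sub_eq_add_neg, zpow_add₀ (ne_of_gt hθ0)]
        congr 1
        rw [← zpow_natCast (θr ^ (-2:ℤ)) (j+1), ← zpow_mul]
        all_goals congr 1
        all_goals push_cast
        all_goals ring
      have h4 : (θr ^ (-2:ℤ)) ≤ (1/4 : ℝ) := by
        have h4' : (4:ℝ) ≤ θr ^ (2:ℕ) := by nlinarith
        rw [zpow_neg, zpow_ofNat]
        rw [inv_le_comm₀ (by nlinarith) (by norm_num)]
        linarith
      have h5 : (θr ^ (-2:ℤ)) ^ (j + 1) ≤ (1/4 : ℝ) ^ (j + 1) :=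
        pow_le_pow_left₀ (le_of_lt (zpow_pos hθ0 _)) h4 _
      have h6 : θr ^ (-(w k₀)) = (θr ^ (w k₀))⁻¹ := zpow_neg θr (w k₀)
      calc |f (j + (k₀ + 1))| ≤ D * θr ^ (-(w (j + (k₀ + 1)))) := h1
      _ ≤ D * θr ^ (-(w k₀) - 2 * ((j:ℤ) + 1)) :=
          mul_le_mul_of_nonneg_left h2 (le_of_lt hDpos)
      _ = D * (θr ^ (-(w k₀)) * (θr ^ (-2:ℤ)) ^ (j + 1)) := by rw [h3]
      _ ≤ D * (θr ^ (-(w k₀)) * (1/4 : ℝ) ^ (j + 1)) := by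
          refine mul_le_mul_of_nonneg_left ?_ (le_of_lt hDpos)
          exact mul_le_mul_of_nonneg_left h5 (le_of_lt (zpow_pos hθ0 _))
      _ = E * (1/4 : ℝ) ^ (j + 1) := by rw [hE, h6]; ring
    have h7 : |∑' j, f (j + (k₀ + 1))| ≤ ∑' j, |f (j + (k₀ + 1))| := by
      simpa using norm_tsum_le_tsum_norm (f := fun j => f (j + (k₀ + 1))) (by simpa using habs)
    have h8 : ∑' j, |f (j + (k₀ + 1))| ≤ ∑' j : ℕ, E * (1/4 : ℝ) ^ (j + 1) :=
      Summable.tsum_le_tsum hbound habs hgs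
    have h9 : ∑' j : ℕ, E * (1/4 : ℝ) ^ (j + 1) = E / 3 := by
      have : ∀ j : ℕ, E * (1/4 : ℝ) ^ (j + 1) = (E * (1/4)) * (1/4 : ℝ) ^ j := by
        intro j; rw [pow_succ]; ring
      rw [tsum_congr this, tsum_mul_left, tsum_geometric_of_lt_one (by norm_num) (by norm_num)]
      norm_num
      ring
    linarith
  -- combine
  have hcomb : f k₀ + ∑' j, f (j + (k₀ + 1)) = 0 := by
    rw [hsumeq] at hsplit
    rw [hsplit, hf0]
  have : |f k₀| ≤ E / 3 := by
    have : f k₀ = -(∑' j, f (j + (k₀ + 1))) := by linarith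
    rw [this, abs_neg]
    exact htail
  rw [hfk₀] at this
  linarith


theorem aux_exists_transcendental {θr : ℝ} (hθ2 : 2 ≤ θr) {w : ℕ → ℤ} {N : ℕ}
    (hw : ∀ k, N ≤ k → ∀ j : ℕ, w k + 2 * (j : ℤ) ≤ w (k + j))
    (P : ℕ → Prop) [DecidablePred P] (hP : {k : ℕ | P k ∧ N ≤ k}.Infinite)
    (a b : ℕ) (hab : a ≠ b)
    (R : Type*) [CommRing R] [Countable R] [Algebra R ℝ]
    (hinj : Function.Injective (algebraMap R ℝ)) :
    ∃ g : ℕ → Bool, Transcendental R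
      (∑' k, ((if P k then (if N ≤ k ∧ g k = true then a else b) else 0 : ℕ) : ℝ) / θr ^ w k) := by
  classical
  by_contra hcon
  push_neg at hcon
  simp only [Transcendental, not_not] at hcon
  -- the parameter space
  set V := {k : ℕ // P k ∧ N ≤ k} with hV
  have hVinf : Infinite V := hP.to_subtype
  -- digits
  set dig : (ℕ → Bool) → ℕ → ℕ :=
    fun g k => if P k then (if N ≤ k ∧ g k = true then a else b) else 0 with hdig
  set ext : (V → Bool) → (ℕ → Bool) :=
    fun h k => if hk : P k ∧ N ≤ k then h ⟨k, hk⟩ else false with hext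
  set Φ : (V → Bool) → ℝ := fun h => ∑' k, (dig (ext h) k : ℝ) / θr ^ w k with hΦ
  have hM : ∀ g k, dig g k ≤ max a b := by
    intro g k
    rw [hdig]
    dsimp only
    split_ifs <;> omega
  have hDbound : ∀ g g' k, |(dig g k : ℝ) - (dig g' k : ℝ)| ≤ |(a:ℝ) - b| := by
    intro g g' k
    rw [hdig]
    dsimp only
    split_ifs <;>
      simp_all [abs_sub_comm, abs_nonneg] <;>
      · rw [abs_sub_comm]
  have hDpos : 0 < |(a:ℝ) - b| := by
    rw [abs_pos, sub_ne_zero]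
    exact_mod_cast hab
  -- injectivity of Φ
  have hΦinj : Function.Injective Φ := by
    intro h h' hhh
    by_contra hne
    have hdiff : ∃ k, dig (ext h) k ≠ dig (ext h') k := by
      obtain ⟨v, hv⟩ := Function.ne_iff.1 hne
      refine ⟨v.1, ?_⟩
      rw [hdig]
      dsimp only
      have hv1 : P v.1 ∧ N ≤ v.1 := v.2
      rw [if_pos hv1.1, if_pos hv1.1]
      rw [hext]
      dsimp only
      simp only [dif_pos hv1]
      rcases Bool.eq_false_or_eq_true (h v) with hb | hb <;>
        rcases Bool.eq_false_or_eq_true (h' v) with hb' | hb' <;>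
          simp [hb, hb', hv1.2] at hv ⊢ <;> omega
    set k₀ := Nat.find hdiff with hk₀def
    have hk₀ : dig (ext h) k₀ ≠ dig (ext h') k₀ := Nat.find_spec hdiff
    have hbelow : ∀ k, k < k₀ → dig (ext h) k = dig (ext h') k := by
      intro k hk
      rw [hk₀def] at hk
      exact not_not.1 (Nat.find_min hdiff hk)
    have hPk₀ : P k₀ ∧ N ≤ k₀ := by
      by_contra hnp
      apply hk₀
      rw [hdig]
      dsimp only
      rw [hext]
      dsimp only
      by_cases h1 : P k₀
      · have h2 : ¬ N ≤ k₀ := fun h2 => hnp ⟨h1, h2⟩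
        rw [if_pos h1, if_pos h1]
        simp only [dif_neg (fun hc : P k₀ ∧ N ≤ k₀ => h2 hc.2)]
      · rw [if_neg h1, if_neg h1]
    have hat : |(dig (ext h) k₀ : ℝ) - (dig (ext h') k₀ : ℝ)| = |(a:ℝ) - b| := by
      have h1 : dig (ext h) k₀ = a ∨ dig (ext h) k₀ = b := by
        rw [hdig]; dsimp only; rw [if_pos hPk₀.1]; split_ifs <;> simp
      have h2 : dig (ext h') k₀ = a ∨ dig (ext h') k₀ = b := by
        rw [hdig]; dsimp only; rw [if_pos hPk₀.1]; split_ifs <;> simp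
      rcases h1 with h1 | h1 <;> rcases h2 with h2 | h2 <;>
        rw [h1, h2] at hk₀ ⊢ <;>
        first
          | exact absurd rfl hk₀
          | rfl
          | rw [abs_sub_comm]
    exact aux_sep hθ2 hw (dig (ext h)) (dig (ext h')) (max a b) (hM _) (hM _)
      hDpos (hDbound _ _) hPk₀.2 hbelow hat hhh
  -- contradiction with countability
  have hAcount : {x : ℝ | IsAlgebraic R x}.Countable := aux_countable_algebraic hinj
  have : Countable {x : ℝ | IsAlgebraic R x} := hAcount.to_subtype
  have hmap : Function.Injective (fun h : V → Bool =>
      (⟨Φ h, hcon (ext h)⟩ : {x : ℝ | IsAlgebraic R x})) := by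
    intro h h' hhh
    exact hΦinj (congrArg Subtype.val hhh)
  have : Countable (V → Bool) := hmap.countable
  exact (aux_uncountable_arrow V).not_countable this
/-- Construction of algebraically independent Liouville-type numbers:
given `θ ≥ 2`, a sequence `(α_k)` with `α₀ > 0` and `α_{k+1} > c·α_k` for some `c > 1`,
a set `J ⊆ ℕ∖{0}` with at least two elements, a finite set `F ⊆ ℝ`, and a map
`φ : ℕ → {0,…,e}` with all fibers infinite, there are sequences `(u_k^i)` supported
(with values in `J`) exactly on the fiber `φ⁻¹{i}`, such that the numbers
`σ_i = Σ_k u_k^i / θ^⌊α_k⌋` are algebraically independent over `ℚ(F)`. -/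
theorem statement9 (e : ℕ) (he : 1 ≤ e) (θ : ℕ) (hθ : 2 ≤ θ)
    (α : ℕ → ℝ) (hα0 : 0 < α 0) (c : ℝ) (hc : 1 < c)
    (hαgrow : ∀ k, c * α k < α (k + 1))
    (J : Set ℕ) (hJ0 : 0 ∉ J) (hJ2 : ∃ a ∈ J, ∃ b ∈ J, a ≠ b)
    (F : Finset ℝ)
    (φ : ℕ → ℕ) (hφle : ∀ k, φ k ≤ e)
    (hφinf : ∀ i ≤ e, {k | φ k = i}.Infinite) :
    ∃ u : ℕ → ℕ → ℕ,
      (∀ i ≤ e, ∀ k, (φ k = i → u i k ∈ J) ∧ (φ k ≠ i → u i k = 0)) ∧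
      AlgebraicIndependent (IntermediateField.adjoin ℚ (F : Set ℝ))
        (fun i : Fin (e + 1) => ∑' k, (u i k : ℝ) / (θ : ℝ) ^ ⌊α k⌋) := by
  classical
  obtain ⟨a, haJ, b, hbJ, hab⟩ := hJ2
  have hcpos : (0:ℝ) < c := by linarith
  have hpos : ∀ k, 0 < α k := by
    intro k
    induction k with
    | zero => exact hα0
    | succ n ih => have := hαgrow n; nlinarith
  have hstep : ∀ k, α k < α (k+1) := by
    intro k; have := hαgrow k; nlinarith [hpos k]
  have hmono : Monotone α := monotone_nat_of_le_succ (fun k => (hstep k).le)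
  have hgrowpow : ∀ k j, c ^ j * α k ≤ α (k + j) := by
    intro k j
    induction j with
    | zero => simp
    | succ n ih =>
      have h1 := hαgrow (k + n)
      have hkn : k + (n+1) = (k + n) + 1 := by omega
      rw [hkn]
      have hc2 : c * (c ^ n * α k) ≤ c * α (k + n) := by nlinarith
      have hc3 : c ^ (n+1) * α k = c * (c ^ n * α k) := by ring
      linarith
  obtain ⟨N, hN⟩ : ∃ N : ℕ, 2 ≤ (c - 1) * α N := by
    obtain ⟨n, hn⟩ := pow_unbounded_of_one_lt (2 / ((c - 1) * α 0)) hc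
    refine ⟨n, ?_⟩
    have hca : 0 < (c - 1) * α 0 := by nlinarith
    have h2 : 2 < c ^ n * ((c - 1) * α 0) := by
      rw [div_lt_iff₀ hca] at hn; linarith
    have h3 : c ^ n * α 0 ≤ α n := by simpa using hgrowpow 0 n
    nlinarith [pow_pos hcpos n]
  set w : ℕ → ℤ := fun k => ⌊α k⌋ with hwdef
  have hw : ∀ k, N ≤ k → ∀ j : ℕ, w k + 2 * (j:ℤ) ≤ w (k + j) := by
    intro k hk j
    have hαk2 : 2 ≤ (c - 1) * α k :=
      hN.trans (mul_le_mul_of_nonneg_left (hmono hk) (by linarith))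
    have h1 : 1 + (j:ℝ) * (c - 1) ≤ c ^ j := by
      have h := one_add_mul_le_pow (show (-2:ℝ) ≤ c - 1 by linarith) j
      rw [show (1:ℝ) + (c-1) = c by ring] at h
      exact h
    have h2 : α k + 2 * (j:ℝ) ≤ α (k + j) := by
      have H1 : (1 + (j:ℝ) * (c - 1)) * α k ≤ c ^ j * α k :=
        mul_le_mul_of_nonneg_right h1 (hpos k).le
      have H2 := hgrowpow k j
      have H3 : (j:ℝ) * 2 ≤ (j:ℝ) * ((c - 1) * α k) :=
        mul_le_mul_of_nonneg_left hαk2 (Nat.cast_nonneg j)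
      nlinarith
    rw [hwdef]
    dsimp only
    rw [Int.le_floor]
    push_cast
    have hfl : (⌊α k⌋ : ℝ) ≤ α k := Int.floor_le _
    linarith
  have hθ2 : (2:ℝ) ≤ (θ:ℝ) := by exact_mod_cast hθ
  set dig : ℕ → (ℕ → Bool) → ℕ → ℕ :=
    fun i g k => if φ k = i then (if N ≤ k ∧ g k = true then a else b) else 0 with hdig
  set σ : ℕ → (ℕ → Bool) → ℝ :=
    fun i g => ∑' k, (dig i g k : ℝ) / (θ:ℝ) ^ w k with hσ
  set K := IntermediateField.adjoin ℚ (F : Set ℝ) with hK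
  have hKcount : Countable K := by
    rw [← Cardinal.mk_le_aleph0_iff]
    refine (IntermediateField.cardinalMk_adjoin_le ℚ _).trans ?_
    have h1 : Cardinal.mk ℚ ≤ Cardinal.aleph0 := Cardinal.mk_le_aleph0
    have h2 : Cardinal.mk (F : Set ℝ) ≤ Cardinal.aleph0 := by
      have : Countable (F : Set ℝ) := (F.finite_toSet).countable.to_subtype
      exact Cardinal.mk_le_aleph0
    exact sup_le (sup_le h1 h2) le_rfl
  have hbuild : ∀ n : ℕ, n ≤ e + 1 → ∃ gs : ℕ → ℕ → Bool,
      AlgebraicIndependent K (fun i : Fin n => σ i.1 (gs i.1)) := by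
    intro n
    induction n with
    | zero =>
      intro _
      refine ⟨fun _ _ => false, ?_⟩
      rw [algebraicIndependent_empty_type_iff]
      exact (algebraMap K ℝ).injective
    | succ n ih =>
      intro hn
      obtain ⟨gs, hind⟩ := ih (by omega)
      set L := Algebra.adjoin K (Set.range (fun i : Fin n => σ i.1 (gs i.1))) with hL
      have hLcount : Countable L := by
        rw [← Cardinal.mk_le_aleph0_iff]
        refine (Algebra.cardinalMk_adjoin_le _ _).trans ?_
        have h1 : Cardinal.mk K ≤ Cardinal.aleph0 := Cardinal.mk_le_aleph0
        have h2 : Cardinal.mk (Set.range fun i : Fin n => σ i.1 (gs i.1))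
            ≤ Cardinal.aleph0 := by
          have : Countable (Set.range fun i : Fin n => σ i.1 (gs i.1)) :=
            (Set.countable_range _).to_subtype
          exact Cardinal.mk_le_aleph0
        exact sup_le (sup_le h1 h2) le_rfl
      have hLinj : Function.Injective (algebraMap L ℝ) := fun x y hxy => Subtype.ext hxy
      have hSinf : {k : ℕ | φ k = n ∧ N ≤ k}.Infinite := by
        have h1 : {k : ℕ | φ k = n} \ Set.Iio N ⊆ {k : ℕ | φ k = n ∧ N ≤ k} := by
          rintro k ⟨h1, h2⟩
          exact ⟨h1, by simpa using h2⟩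
        exact (((hφinf n (by omega)).diff (Set.finite_Iio N))).mono h1
      obtain ⟨g, hg⟩ := aux_exists_transcendental hθ2 hw (fun k => φ k = n) hSinf a b hab
        L hLinj
      have hgσ : Transcendental L (σ n g) := hg
      have hopt := (hind.option_iff_transcendental (σ n g)).2 hgσ
      set emb : Fin (n+1) → Option (Fin n) :=
        fun i => if h : (i:ℕ) < n then some ⟨i, h⟩ else none with hembdef
      have hembinj : Function.Injective emb := by
        intro i j hij
        rw [hembdef] at hij
        dsimp only at hij
        by_cases h1 : (i:ℕ) < n <;> by_cases h2 : (j:ℕ) < n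
        · rw [dif_pos h1, dif_pos h2] at hij
          have hs := Option.some.inj hij
          rw [Fin.mk.injEq] at hs
          exact Fin.ext hs
        · rw [dif_pos h1, dif_neg h2] at hij
          exact absurd hij (by simp)
        · rw [dif_neg h1, dif_pos h2] at hij
          exact absurd hij (by simp)
        · have hi : (i:ℕ) = n := by omega
          have hj : (j:ℕ) = n := by omega
          exact Fin.ext (by omega)
      have hcomp := hopt.comp emb hembinj
      refine ⟨Function.update gs n g, ?_⟩
      have heq : ((fun o : Option (Fin n) =>
            o.elim (σ n g) (fun i : Fin n => σ i.1 (gs i.1))) ∘ emb)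
          = fun i : Fin (n+1) => σ i.1 (Function.update gs n g i.1) := by
        funext i
        rw [hembdef]
        simp only [Function.comp_apply]
        by_cases h : (i:ℕ) < n
        · rw [dif_pos h]
          simp only [Option.elim]
          rw [Function.update_of_ne (by omega : (i:ℕ) ≠ n)]
        · rw [dif_neg h]
          have hi : (i:ℕ) = n := by omega
          simp only [Option.elim]
          rw [hi, Function.update_self]
      rwa [heq] at hcomp
  obtain ⟨gs, hAI⟩ := hbuild (e+1) le_rfl
  refine ⟨fun i k => dig i (gs i) k, ?_, ?_⟩
  · intro i hi k
    constructor
    · intro hφk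
      rw [hdig]; dsimp only
      rw [if_pos hφk]
      split_ifs
      · exact haJ
      · exact hbJ
    · intro hφk
      rw [hdig]; dsimp only
      rw [if_neg hφk]
  · exact hAI
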